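/- The map sending a Schnyder wood string $s$ of length $3n$ to a two-dimensional walk, obtained by moving the leading character (always a 'g') to the end, replacing each 'b' by an increment $(1,-1)$ and each maximal block of $k \ge 0$ 'r's followed by a 'g' by an increment $(-k,1)$, is a bijection between Schnyder wood strings of length $3n$ and walks of length $2n$ with increments in $\{(-k,1) : k \ge 0\} \cup \{(1,-1)\}$ that start and end at the origin and stay in $\{(x,y) \in \mathbb{Z}^2 : x \ge 0, y \ge -1\}$. -/

import Mathlib

/-- The characters of a Schnyder wood string. -/
inductive SChar : Type
  | g : SChar
  | b : SChar
  | r : SChar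
deriving DecidableEq

/-- Convert a (rotated) Schnyder wood string into a list of walk increments: each `b`
becomes `(1,-1)` and each maximal block of `k` `r`'s followed by a `g` becomes `(-k, 1)`.
The second argument accumulates the number of pending `r`'s. -/
def toSteps : List SChar → ℕ → List (ℤ × ℤ)
  | [], _ => []
  | SChar.b :: rest, _ => (1, -1) :: toSteps rest 0
  | SChar.r :: rest, k => toSteps rest (k + 1)
  | SChar.g :: rest, k => (-(k : ℤ), 1) :: toSteps rest 0

/-- The walk associated to a Schnyder wood string `s`: move the leading character to the
end, convert to increments, and take partial sums starting at the origin. -/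
def walkOf (s : List SChar) : List (ℤ × ℤ) :=
  List.scanl (fun p q => p + q) ((0 : ℤ), (0 : ℤ)) (toSteps (s.rotate 1) 0)

/-- A Schnyder wood string of length `3n`: `n` copies of each of `g`, `b`, `r`; every
prefix has at least as many `g`s as `b`s and at least as many `b`s as `r`s; no `r` is
immediately followed by a `b`. -/
def IsSchnyderString (n : ℕ) (s : List SChar) : Prop :=
  s.length = 3 * n ∧ s.count SChar.g = n ∧ s.count SChar.b = n ∧ s.count SChar.r = n ∧
  (∀ m : ℕ, (s.take m).count SChar.b ≤ (s.take m).count SChar.g ∧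
    (s.take m).count SChar.r ≤ (s.take m).count SChar.b) ∧
  ∀ i : ℕ, ¬(s[i]? = some SChar.r ∧ s[i+1]? = some SChar.b)

/-- A walk of length `2n` (a list of `2n+1` points of `ℤ²`) with increments in
`{(-k,1) : k ≥ 0} ∪ {(1,-1)}`, starting and ending at the origin, and staying in
`{(x,y) : x ≥ 0, y ≥ -1}`. -/
def IsGoodWalk (n : ℕ) (w : List (ℤ × ℤ)) : Prop :=
  w.length = 2 * n + 1 ∧ w[0]? = some (0, 0) ∧ w[2 * n]? = some (0, 0) ∧
  (∀ (i : ℕ) (p q : ℤ × ℤ), w[i]? = some p → w[i+1]? = some q →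
    q - p = (1, -1) ∨ ∃ k : ℕ, q - p = (-(k : ℤ), 1)) ∧
  ∀ p ∈ w, 0 ≤ p.1 ∧ -1 ≤ p.2

def pos (P : List SChar) : ℤ × ℤ :=
  ((P.count SChar.b : ℤ) - P.count SChar.r, (P.count SChar.g : ℤ) - P.count SChar.b)

inductive Blocks : List SChar → Prop
  | nil : Blocks []
  | bcons (t) : Blocks t → Blocks (SChar.b :: t)
  | block (k t) : Blocks t → Blocks (List.replicate k SChar.r ++ SChar.g :: t)

def fromSteps : List (ℤ × ℤ) → List SChar
  | [] => []
  | p :: rest => if p.2 = -1 then SChar.b :: fromSteps rest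
      else List.replicate (-p.1).toNat SChar.r ++ SChar.g :: fromSteps rest

theorem toSteps_replicate (k : ℕ) : ∀ (l : List SChar) (m : ℕ),
    toSteps (List.replicate k SChar.r ++ l) m = toSteps l (m + k) := by
  induction k with
  | zero => intro l m; simp
  | succ k ih =>
    intro l m
    rw [List.replicate_succ]
    show toSteps (List.replicate k SChar.r ++ l) (m+1) = _
    rw [ih]
    congr 1
    omega

theorem toSteps_block (k : ℕ) (t : List SChar) (m : ℕ) :
    toSteps (List.replicate k SChar.r ++ SChar.g :: t) m
      = (-((m + k : ℕ) : ℤ), 1) :: toSteps t 0 := by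
  rw [toSteps_replicate]
  rfl

theorem length_toSteps : ∀ (t : List SChar) (k : ℕ),
    (toSteps t k).length = t.count SChar.g + t.count SChar.b := by
  intro t
  induction t with
  | nil => intro k; simp [toSteps]
  | cons c t ih =>
    intro k
    cases c <;> simp [toSteps, ih, List.count_cons] <;> omega

theorem shape_toSteps : ∀ (t : List SChar) (k : ℕ) (x : ℤ × ℤ), x ∈ toSteps t k →
    x = (1, -1) ∨ ∃ m : ℕ, x = (-(m : ℤ), 1) := by
  intro t
  induction t with
  | nil => intro k x hx; simp [toSteps] at hx
  | cons c t ih =>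
    intro k x hx
    cases c <;> simp only [toSteps, List.mem_cons] at hx
    · rcases hx with h | h
      · right; exact ⟨k, h⟩
      · exact ih 0 x h
    · rcases hx with h | h
      · left; exact h
      · exact ih 0 x h
    · exact ih (k+1) x hx

theorem fromSteps_toSteps {t : List SChar} (h : Blocks t) :
    fromSteps (toSteps t 0) = t := by
  induction h with
  | nil => rfl
  | bcons t ht ih =>
    simp only [toSteps, fromSteps, ih]
    norm_num
  | block k t ht ih =>
    rw [toSteps_block]
    simp only [fromSteps]
    norm_num
    rw [ih]

theorem blocks_fromSteps : ∀ d : List (ℤ × ℤ), Blocks (fromSteps d) := by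
  intro d
  induction d with
  | nil => exact Blocks.nil
  | cons p rest ih =>
    simp only [fromSteps]
    split
    · exact Blocks.bcons _ ih
    · exact Blocks.block _ _ ih

theorem toSteps_fromSteps : ∀ d : List (ℤ × ℤ),
    (∀ x ∈ d, x = (1, -1) ∨ ∃ m : ℕ, x = (-(m : ℤ), 1)) →
    toSteps (fromSteps d) 0 = d := by
  intro d
  induction d with
  | nil => intro _; rfl
  | cons p rest ih =>
    intro h
    have hp := h p List.mem_cons_self
    have hrest := fun x hx => h x (List.mem_cons_of_mem _ hx)
    simp only [fromSteps]
    rcases hp with hp | ⟨m, hp⟩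
    · subst hp
      simp only [toSteps, if_pos rfl, ↓reduceIte]
      rw [ih hrest]
    · subst hp
      have : ((-(m:ℤ), (1:ℤ)) : ℤ × ℤ).2 ≠ -1 := by norm_num
      rw [if_neg this, toSteps_block, ih hrest]
      norm_num

theorem sum_toSteps {t : List SChar} (h : Blocks t) :
    (toSteps t 0).sum = pos t := by
  induction h with
  | nil => simp [toSteps, pos, Prod.mk_zero_zero]
  | bcons t ht ih =>
    simp only [toSteps, List.sum_cons, ih, pos, List.count_cons]
    simp [Prod.ext_iff]
    constructor <;> ring
  | block k t ht ih =>
    rw [toSteps_block]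
    simp only [List.sum_cons, ih, pos, List.count_cons, List.count_append,
      List.count_replicate]
    simp [Prod.ext_iff]
    constructor <;> ring

theorem pos_nil : pos [] = (0, 0) := by simp [pos]

theorem pos_cons_b (P : List SChar) : pos (SChar.b :: P) = (1, -1) + pos P := by
  simp [pos, List.count_cons, Prod.ext_iff]
  constructor <;> push_cast <;> ring

theorem pos_block (k : ℕ) (P : List SChar) :
    pos (List.replicate k SChar.r ++ SChar.g :: P) = (-(k : ℤ), 1) + pos P := by
  simp [pos, List.count_cons, List.count_append, List.count_replicate, Prod.ext_iff]
  constructor <;> push_cast <;> ring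

theorem take_sum {t : List SChar} (h : Blocks t) :
    ∀ i : ℕ, ∃ j : ℕ, ((toSteps t 0).take i).sum = pos (t.take j) := by
  induction h with
  | nil => intro i; exact ⟨0, by simp [toSteps, pos, Prod.mk_zero_zero]⟩
  | bcons t ht ih =>
    intro i
    cases i with
    | zero => exact ⟨0, by simp [pos, Prod.mk_zero_zero]⟩
    | succ i =>
      obtain ⟨j, hj⟩ := ih i
      refine ⟨j + 1, ?_⟩
      simp only [toSteps, List.take_succ_cons, List.sum_cons, hj, pos_cons_b]
  | block k t ht ih =>
    intro i
    cases i with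
    | zero => exact ⟨0, by simp [pos, Prod.mk_zero_zero]⟩
    | succ i =>
      obtain ⟨j, hj⟩ := ih i
      refine ⟨k + 1 + j, ?_⟩
      rw [toSteps_block]
      have htake : (List.replicate k SChar.r ++ SChar.g :: t).take (k + 1 + j)
          = List.replicate k SChar.r ++ SChar.g :: t.take j := by
        rw [List.take_append]
        simp [List.take_replicate]
        have h1 : (k + 1 + j) ⊓ k = k := by omega
        have h2 : k + 1 + j - k = j + 1 := by omega
        rw [h1, h2, List.take_succ_cons]
      rw [htake]
      simp only [List.take_succ_cons, List.sum_cons, hj, pos_block]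
      norm_num

theorem pos_replicate_r (j : ℕ) : pos (List.replicate j SChar.r) = (-(j : ℤ), 0) := by
  simp [pos, List.count_replicate]

theorem bounds_prefix {t : List SChar} (h : Blocks t) : ∀ p : ℤ × ℤ,
    (∀ i : ℕ, 0 ≤ (p + ((toSteps t 0).take i).sum).1 ∧
      -1 ≤ (p + ((toSteps t 0).take i).sum).2) →
    ∀ j : ℕ, 0 ≤ (p + pos (t.take j)).1 ∧ -1 ≤ (p + pos (t.take j)).2 := by
  induction h with
  | nil =>
    intro p hp j
    have := hp 0
    simpa [toSteps, pos] using this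
  | bcons t ht ih =>
    intro p hp j
    cases j with
    | zero => simpa [pos] using hp 0
    | succ j =>
      rw [List.take_succ_cons, pos_cons_b, ← add_assoc]
      refine ih (p + (1, -1)) (fun i => ?_) j
      have := hp (i + 1)
      simpa [toSteps, List.take_succ_cons, add_assoc] using this
  | block k t ht ih =>
    intro p hp j
    have hp0 := hp 0
    simp only [List.take_zero, List.sum_nil, add_zero] at hp0
    have hp1 := hp 1
    rw [toSteps_block] at hp1
    simp only [List.take_succ_cons, List.take_zero, List.sum_cons, List.sum_nil,
      add_zero, Nat.zero_add] at hp1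
    rcases le_or_gt j k with hjk | hjk
    · have htake : (List.replicate k SChar.r ++ SChar.g :: t).take j
          = List.replicate j SChar.r := by
        rw [List.take_append, List.take_replicate]
        simp only [List.length_replicate]
        have h1 : j ⊓ k = j := by omega
        have h2 : j - k = 0 := by omega
        rw [h1, h2]
        simp
      rw [htake, pos_replicate_r]
      constructor
      · have := hp1.1
        simp only [Prod.fst_add] at this ⊢
        have hk : (j : ℤ) ≤ (k : ℤ) := by exact_mod_cast hjk
        simp at this ⊢
        omega
      · have := hp0.2
        simpa using this
    · have htake : (List.replicate k SChar.r ++ SChar.g :: t).take j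
          = List.replicate k SChar.r ++ SChar.g :: t.take (j - k - 1) := by
        rw [List.take_append, List.take_replicate]
        simp only [List.length_replicate]
        have h1 : j ⊓ k = k := by omega
        have h2 : j - k = (j - k - 1) + 1 := by omega
        rw [h1, h2, List.take_succ_cons]
        simp
      rw [htake, pos_block, ← add_assoc]
      refine ih (p + (-(k : ℤ), 1)) (fun i => ?_) (j - k - 1)
      have := hp (i + 1)
      rw [toSteps_block] at this
      simpa [List.take_succ_cons, add_assoc] using this

theorem blocks_no_rb {t : List SChar} (h : Blocks t) :
    ∀ i : ℕ, ¬(t[i]? = some SChar.r ∧ t[i+1]? = some SChar.b) := by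
  induction h with
  | nil => intro i hi; simp at hi
  | bcons t ht ih =>
    intro i hi
    cases i with
    | zero => simp at hi
    | succ i =>
      exact ih i (by simpa using hi)
  | block k t ht ih =>
    intro i hi
    obtain ⟨hi1, hi2⟩ := hi
    rcases lt_trichotomy i k with hik | hik | hik
    · -- i < k : entry i+1 is r or g
      rcases Nat.lt_or_ge (i+1) k with h1 | h1
      · rw [List.getElem?_append_left (by simpa using h1)] at hi2
        simp [List.getElem?_replicate, h1] at hi2
      · have h1' : k ≤ i + 1 := h1
        rw [List.getElem?_append_right (by simpa using h1')] at hi2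
        have : i + 1 - k = 0 := by omega
        rw [List.length_replicate, this] at hi2
        simp at hi2
    · subst hik
      rw [List.getElem?_append_right (by simp)] at hi1
      simp at hi1
    · have h1 : k ≤ i := le_of_lt hik
      rw [List.getElem?_append_right (by simpa using h1)] at hi1
      rw [List.getElem?_append_right (by simp; omega)] at hi2
      simp only [List.length_replicate] at hi1 hi2
      have e1 : i - k = (i - k - 1) + 1 := by omega
      have e2 : i + 1 - k = (i - k - 1) + 2 := by omega
      rw [e1] at hi1
      rw [e2] at hi2
      simp only [List.getElem?_cons_succ] at hi1 hi2
      exact ih (i - k - 1) ⟨hi1, hi2⟩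

theorem no_rb_blocks : ∀ t : List SChar,
    (∀ i : ℕ, ¬(t[i]? = some SChar.r ∧ t[i+1]? = some SChar.b)) →
    t.getLast? ≠ some SChar.r → Blocks t := by
  intro t
  induction t with
  | nil => intro _ _; exact Blocks.nil
  | cons c t ih =>
    intro h hl
    have ht : Blocks t := by
      refine ih (fun i hi => h (i+1) (by simpa using hi)) ?_
      cases t with
      | nil => simp
      | cons d t' => simpa [List.getLast?_cons_cons] using hl
    cases c with
    | b => exact Blocks.bcons _ ht
    | g => exact Blocks.block 0 t ht
    | r =>
      cases ht with
      | nil => simp at hl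
      | bcons t' ht' =>
        exact absurd (h 0 (by simp)) (fun h => h)
      | block k t' ht' =>
        have : SChar.r :: (List.replicate k SChar.r ++ SChar.g :: t')
            = List.replicate (k+1) SChar.r ++ SChar.g :: t' := by
          rw [List.replicate_succ, List.cons_append]
        rw [this]
        exact Blocks.block (k+1) t' ht'

theorem scanl_getElem? : ∀ (d : List (ℤ × ℤ)) (a : ℤ × ℤ) (i : ℕ), i ≤ d.length →
    (List.scanl (fun p q => p + q) a d)[i]? = some (a + (d.take i).sum) := by
  intro d
  induction d with
  | nil =>
    intro a i hi
    have h0 : i = 0 := Nat.le_zero.mp hi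
    subst h0
    simp [List.scanl]
  | cons x d ih =>
    intro a i hi
    cases i with
    | zero => simp [List.scanl]
    | succ i =>
      rw [List.scanl_cons]
      have : i ≤ d.length := by simpa using hi
      simp only [List.singleton_append, List.getElem?_cons_succ, ih (a + x) i this,
        List.take_succ_cons, List.sum_cons, add_assoc]

theorem scanl_inj : ∀ (d1 d2 : List (ℤ × ℤ)) (a b : ℤ × ℤ),
    List.scanl (fun p q => p + q) a d1 = List.scanl (fun p q => p + q) b d2 →
    a = b ∧ d1 = d2 := by
  intro d1
  induction d1 with
  | nil =>
    intro d2 a b h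
    cases d2 with
    | nil => simpa [List.scanl] using h
    | cons y d2 =>
      exfalso
      have := congrArg List.length h
      simp [List.length_scanl] at this
  | cons x d1 ih =>
    intro d2 a b h
    cases d2 with
    | nil =>
      exfalso
      have := congrArg List.length h
      simp [List.length_scanl] at this
    | cons y d2 =>
      rw [List.scanl_cons, List.scanl_cons] at h
      simp only [List.singleton_append, List.cons.injEq] at h
      obtain ⟨hab, h2⟩ := h
      subst hab
      obtain ⟨h3, h4⟩ := ih d2 (a + x) (a + y) h2
      have hx : x = y := by
        have := h3
        exact add_left_cancel this
      exact ⟨rfl, by rw [hx, h4]⟩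

theorem scanl_diff : ∀ (v : List (ℤ × ℤ)) (a : ℤ × ℤ),
    a :: v = List.scanl (fun p q => p + q) a (List.zipWith (fun p q => q - p) (a :: v) v) := by
  intro v
  induction v with
  | nil => intro a; simp [List.scanl]
  | cons b v ih =>
    intro a
    simp only [List.zipWith_cons_cons, List.scanl_cons, List.singleton_append]
    rw [show a + (b - a) = b by ring]
    exact congrArg (a :: ·) (ih b)

theorem length_eq_counts : ∀ t : List SChar,
    t.length = t.count SChar.g + t.count SChar.b + t.count SChar.r := by
  intro t
  induction t with
  | nil => simp
  | cons c t ih =>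
    cases c <;> simp [List.count_cons, ih] <;> omega

theorem fromSteps_ne_nil (d : List (ℤ × ℤ)) (hd : d ≠ []) : fromSteps d ≠ [] := by
  cases d with
  | nil => exact absurd rfl hd
  | cons p rest =>
    simp only [fromSteps]
    split
    · simp
    · simp

theorem fromSteps_getLast : ∀ (d : List (ℤ × ℤ)) (p : ℤ × ℤ),
    d.getLast? = some p → p.2 ≠ -1 → (fromSteps d).getLast? = some SChar.g := by
  intro d
  induction d with
  | nil => intro p hp; simp at hp
  | cons q rest ih =>
    intro p hp hp2
    cases rest with
    | nil =>
      simp only [List.getLast?_singleton, Option.some.injEq] at hp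
      subst hp
      simp only [fromSteps, if_neg hp2]
      simp [List.getLast?_append, List.getLast?_cons]
    | cons q' rest' =>
      have hp' : (q' :: rest').getLast? = some p := by
        rwa [List.getLast?_cons_cons] at hp
      have ihl := ih p hp' hp2
      simp only [fromSteps] at ihl ⊢
      split
      · simp [List.getLast?_cons, ihl]
      · simp [List.getLast?_append, List.getLast?_cons, ihl]


theorem schnyder_head {n : ℕ} {s : List SChar} (hs : IsSchnyderString n s) :
    s = [] ∨ ∃ u, s = SChar.g :: u := by
  cases s with
  | nil => exact Or.inl rfl
  | cons c u =>
    right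
    refine ⟨u, ?_⟩
    have h1 := hs.2.2.2.2.1 1
    cases c with
    | g => rfl
    | b => simp [List.count_cons] at h1
    | r => simp [List.count_cons] at h1

theorem schnyder_rotate_no_rb {n : ℕ} {u : List SChar}
    (hs : IsSchnyderString n (SChar.g :: u)) :
    ∀ i : ℕ, ¬((u ++ [SChar.g])[i]? = some SChar.r ∧
      (u ++ [SChar.g])[i+1]? = some SChar.b) := by
  intro i ⟨h1, h2⟩
  have hrb := hs.2.2.2.2.2
  rcases Nat.lt_or_ge (i+1) u.length with hlt | hge
  · rw [List.getElem?_append_left hlt] at h2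
    rw [List.getElem?_append_left (by omega)] at h1
    exact hrb (i+1) ⟨by simpa using h1, by simpa using h2⟩
  · rw [List.getElem?_append_right hge] at h2
    rcases Nat.lt_or_ge (i + 1 - u.length) 1 with hl | hl
    · have : i + 1 - u.length = 0 := by omega
      rw [this] at h2
      simp at h2
    · rw [List.getElem?_eq_none (by simpa using hl)] at h2
      simp at h2

theorem schnyder_blocks {n : ℕ} {u : List SChar}
    (hs : IsSchnyderString n (SChar.g :: u)) : Blocks (u ++ [SChar.g]) :=
  no_rb_blocks _ (schnyder_rotate_no_rb hs)
    (by rw [List.getLast?_concat]; simp)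


theorem mapsTo_good {n : ℕ} {s : List SChar} (hs : IsSchnyderString n s) :
    IsGoodWalk n (walkOf s) := by
  rcases schnyder_head hs with rfl | ⟨u, rfl⟩
  · have hn : n = 0 := by
      have := hs.1
      simp at this
      omega
    subst hn
    have hw : walkOf [] = [((0:ℤ), (0:ℤ))] := by
      simp [walkOf, List.rotate_nil, toSteps, List.scanl]
    rw [hw]
    refine ⟨by simp, by simp, by simp, ?_, ?_⟩
    · intro i p q hp hq
      simp at hq
    · intro p hp
      simp at hp
      subst hp
      norm_num
  · obtain ⟨hlen, hcg, hcb, hcr, hpre, hrb⟩ := hs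
    have hrot : (SChar.g :: u).rotate 1 = u ++ [SChar.g] := by
      rw [List.rotate_cons_succ, List.rotate_zero]
    have hB : Blocks (u ++ [SChar.g]) :=
      schnyder_blocks ⟨hlen, hcg, hcb, hcr, hpre, hrb⟩
    have hw : walkOf (SChar.g :: u)
        = List.scanl (fun p q => p + q) ((0:ℤ), (0:ℤ)) (toSteps (u ++ [SChar.g]) 0) := by
      rw [walkOf, hrot]
    set d := toSteps (u ++ [SChar.g]) 0 with hd
    -- counts of t
    have hcg' : (u ++ [SChar.g]).count SChar.g = n := by
      rw [List.count_cons] at hcg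
      rw [List.count_append]
      simp at hcg ⊢
      omega
    have hcb' : (u ++ [SChar.g]).count SChar.b = n := by
      rw [List.count_cons] at hcb
      rw [List.count_append]
      simp at hcb ⊢
      omega
    have hcr' : (u ++ [SChar.g]).count SChar.r = n := by
      rw [List.count_cons] at hcr
      rw [List.count_append]
      simp at hcr ⊢
      omega
    have hdlen : d.length = 2 * n := by
      rw [hd, length_toSteps, hcg', hcb']
      omega
    have hsum : d.sum = 0 := by
      rw [hd, sum_toSteps hB]
      simp [pos, hcg', hcb', hcr']
    rw [hw]
    refine ⟨?_, ?_, ?_, ?_, ?_⟩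
    · rw [List.length_scanl, hdlen]
    · rw [scanl_getElem? d _ 0 (Nat.zero_le _)]
      simp
    · rw [scanl_getElem? d _ (2*n) (by omega)]
      rw [show d.take (2*n) = d by rw [← hdlen]; exact List.take_length]
      rw [hsum]
      simp
    · intro i p q hp hq
      have hilt : i + 1 < d.length + 1 := by
        rcases List.getElem?_eq_some_iff.mp hq with ⟨h, _⟩
        rwa [List.length_scanl] at h
      have hile : i + 1 ≤ d.length := by omega
      rw [scanl_getElem? d _ (i+1) hile] at hq
      rw [scanl_getElem? d _ i (by omega)] at hp
      have hp' := Option.some.inj hp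
      have hq' := Option.some.inj hq
      have hilt' : i < d.length := by omega
      have htk : d.take (i+1) = d.take i ++ [d[i]] := by
        rw [List.take_succ, List.getElem?_eq_getElem hilt']
        rfl
      have hdq : q - p = d[i] := by
        rw [← hp', ← hq', htk, List.sum_append]
        simp
      rw [hdq]
      have hshape : ∀ x ∈ d, x = (1, -1) ∨ ∃ m : ℕ, x = (-(m : ℤ), 1) := by
        rw [hd]
        exact shape_toSteps _ _
      exact hshape _ (List.getElem_mem _)
    · intro q hq
      rw [List.mem_iff_getElem?] at hq
      obtain ⟨i, hi⟩ := hq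
      have hilt : i < d.length + 1 := by
        rcases List.getElem?_eq_some_iff.mp hi with ⟨h, _⟩
        rwa [List.length_scanl] at h
      rw [scanl_getElem? d _ i (by omega)] at hi
      have hq' := Option.some.inj hi
      obtain ⟨j, hj⟩ := take_sum hB i
      have hqpos : q = pos ((u ++ [SChar.g]).take j) := by
        rw [← hq', hd] at *
        rw [hj]
        simp [Prod.ext_iff]
      rcases le_or_gt j u.length with hj' | hj'
      · have htake : (u ++ [SChar.g]).take j = u.take j :=
          List.take_append_of_le_length hj'
        have h1 := (hpre (j+1)).1
        have h2 := (hpre (j+1)).2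
        rw [List.take_succ_cons] at h1 h2
        simp [List.count_cons] at h1 h2
        rw [hqpos, htake]
        simp [pos]
        constructor <;> omega
      · have htake : (u ++ [SChar.g]).take j = u ++ [SChar.g] :=
          List.take_of_length_le (by simp; omega)
        rw [hqpos, htake]
        simp [pos, hcg', hcb', hcr']

theorem rotate_back (l : List SChar) : (l.rotate 1).rotate (l.length - 1) = l := by
  cases l with
  | nil => simp
  | cons a u =>
    rw [List.rotate_rotate]
    have : 1 + ((a :: u).length - 1) = (a :: u).length := by simp [Nat.add_comm]
    rw [this, List.rotate_length]

theorem schnyder_blocks_rotate {n : ℕ} {s : List SChar} (hs : IsSchnyderString n s) :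
    Blocks (s.rotate 1) := by
  rcases schnyder_head hs with rfl | ⟨u, rfl⟩
  · simpa using Blocks.nil
  · rw [List.rotate_cons_succ, List.rotate_zero]
    exact schnyder_blocks hs

theorem inj_walk {n : ℕ} {s1 s2 : List SChar} (h1 : IsSchnyderString n s1)
    (h2 : IsSchnyderString n s2) (he : walkOf s1 = walkOf s2) : s1 = s2 := by
  have hB1 := schnyder_blocks_rotate h1
  have hB2 := schnyder_blocks_rotate h2
  rw [walkOf, walkOf] at he
  have hts := (scanl_inj _ _ _ _ he).2
  have hrot : s1.rotate 1 = s2.rotate 1 := by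
    rw [← fromSteps_toSteps hB1, ← fromSteps_toSteps hB2, hts]
  have hlen : s1.length = s2.length := by rw [h1.1, h2.1]
  calc s1 = (s1.rotate 1).rotate (s1.length - 1) := (rotate_back s1).symm
    _ = (s2.rotate 1).rotate (s2.length - 1) := by rw [hrot, hlen]
    _ = s2 := rotate_back s2

theorem zip_shape (v : List (ℤ × ℤ)) : ∀ (i : ℕ) (x a : ℤ × ℤ),
    (List.zipWith (fun p q => q - p) (a :: v) v)[i]? = some x →
    ∃ p q : ℤ × ℤ, (a :: v)[i]? = some p ∧ (a :: v)[i+1]? = some q ∧ x = q - p := by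
  induction v with
  | nil => intro i x a hx; simp at hx
  | cons b v ih =>
    intro i x a hx
    cases i with
    | zero =>
      simp only [List.zipWith_cons_cons, List.getElem?_cons_zero, Option.some.injEq] at hx
      exact ⟨a, b, by simp, by simp, hx.symm⟩
    | succ i =>
      simp only [List.zipWith_cons_cons, List.getElem?_cons_succ] at hx
      obtain ⟨p, q, hp, hq, hpq⟩ := ih i x b hx
      exact ⟨p, q, by simpa using hp, by simpa using hq, hpq⟩

theorem surj_walk {n : ℕ} {w : List (ℤ × ℤ)} (hw : IsGoodWalk n w) :
    ∃ s, IsSchnyderString n s ∧ walkOf s = w := by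
  obtain ⟨hwlen, hw0, hw2n, hinc, hbnd⟩ := hw
  by_cases hn : n = 0
  · subst hn
    refine ⟨[], ⟨by simp, by simp, by simp, by simp, fun m => by simp, fun i => by simp⟩, ?_⟩
    have hwlen1 : w.length = 1 := by simpa using hwlen
    obtain ⟨a, rfl⟩ := List.length_eq_one_iff.mp hwlen1
    have : a = (0, 0) := by simpa using hw0
    subst this
    simp [walkOf, List.rotate_nil, toSteps, List.scanl]
  · cases w with
    | nil => simp at hw0
    | cons a v =>
      have ha : a = ((0 : ℤ), (0 : ℤ)) := by simpa using hw0
      subst ha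
      have hw_eq : (((0:ℤ),(0:ℤ)) :: v) = List.scanl (fun p q => p + q) ((0:ℤ),(0:ℤ))
          (List.zipWith (fun p q => q - p) (((0:ℤ),(0:ℤ)) :: v) v) := scanl_diff v _
      set d := List.zipWith (fun p q => q - p) (((0:ℤ),(0:ℤ)) :: v) v with hd
      have hvlen : v.length = 2 * n := by simpa using hwlen
      have hdlen : d.length = 2 * n := by
        rw [hd, List.length_zipWith]
        simp [hvlen]
      have hwget : ∀ i, i ≤ d.length →
          (((0:ℤ),(0:ℤ)) :: v)[i]? = some ((0,0) + (d.take i).sum) := by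
        intro i hi
        rw [hw_eq]
        exact scanl_getElem? d _ i hi
      have hshape : ∀ x ∈ d, x = (1, -1) ∨ ∃ m : ℕ, x = (-(m : ℤ), 1) := by
        intro x hx
        obtain ⟨i, hi⟩ := List.mem_iff_getElem?.mp hx
        obtain ⟨p, q, hp, hq, hpq⟩ := zip_shape v i x _ hi
        rw [hpq]
        exact hinc i p q hp hq
      -- total sum is zero
      have hsum0 : d.sum = ((0:ℤ), (0:ℤ)) := by
        have h1 := hwget d.length le_rfl
        rw [List.take_length] at h1
        rw [hdlen] at h1
        rw [hw2n] at h1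
        have h2 := (Option.some.inj h1).symm
        simpa [Prod.mk_zero_zero] using h2
      -- last step has shape (-k, 1)
      have hdne : d ≠ [] := by
        intro h
        rw [h] at hdlen
        simp at hdlen
        omega
      have hlast : ∃ x, d[2*n-1]? = some x ∧ x.2 = 1 := by
        have hlt : 2*n - 1 < d.length := by omega
        have hxe : d[2*n-1]? = some (d[2*n-1]'hlt) := List.getElem?_eq_getElem hlt
        obtain ⟨p, q, hp, hq, hpq⟩ := zip_shape v (2*n-1) _ _ hxe
        have hq2n : (2*n - 1) + 1 = 2*n := by omega
        rw [hq2n] at hq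
        rw [hw2n] at hq
        have hqv : q = (0, 0) := (Option.some.inj hq).symm
        have hpmem : p ∈ (((0:ℤ),(0:ℤ)) :: v) := List.mem_iff_getElem?.mpr ⟨_, hp⟩
        have hpb := hbnd p hpmem
        rcases hshape _ (List.getElem_mem hlt) with hs | ⟨m, hs⟩
        · exfalso
          rw [hqv, hs] at hpq
          have h5 := congrArg Prod.fst hpq.symm
          simp at h5
          have h6 := hpb.1
          omega
        · refine ⟨_, hxe, ?_⟩
          rw [hpq, hqv]
          rw [hqv, hs] at hpq
          rw [← hpq]
      obtain ⟨x, hxl, hx2⟩ := hlast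
      have hB : Blocks (fromSteps d) := blocks_fromSteps d
      have hts : toSteps (fromSteps d) 0 = d := toSteps_fromSteps d hshape
      have hglast : (fromSteps d).getLast? = some SChar.g := by
        refine fromSteps_getLast d x ?_ (by rw [hx2]; norm_num)
        rw [List.getLast?_eq_getElem?, hdlen]
        exact hxl
      have htcons : (fromSteps d).dropLast ++ [SChar.g] = fromSteps d :=
        List.dropLast_append_getLast? _ (by rw [Option.mem_def]; exact hglast)
      have hpos : pos (fromSteps d) = ((0:ℤ), (0:ℤ)) := by
        rw [← sum_toSteps hB, hts, hsum0]
      have hposc : ((fromSteps d).count SChar.b : ℤ) - (fromSteps d).count SChar.r = 0 ∧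
          ((fromSteps d).count SChar.g : ℤ) - (fromSteps d).count SChar.b = 0 := by
        rw [pos, Prod.mk.injEq] at hpos
        exact hpos
      have hlend : d.length = (fromSteps d).count SChar.g + (fromSteps d).count SChar.b := by
        have := length_toSteps (fromSteps d) 0
        rwa [hts] at this
      have hcg : (fromSteps d).count SChar.g = n := by omega
      have hcb : (fromSteps d).count SChar.b = n := by omega
      have hcr : (fromSteps d).count SChar.r = n := by omega
      have htlen : (fromSteps d).length = 3 * n := by
        rw [length_eq_counts, hcg, hcb, hcr]
        omega
      have hcnt : ∀ c, (SChar.g :: (fromSteps d).dropLast).count c = (fromSteps d).count c := by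
        intro c
        conv_rhs => rw [← htcons]
        cases c <;> simp [List.count_cons, List.count_append]
      have hslen : (SChar.g :: (fromSteps d).dropLast).length = (fromSteps d).length := by
        conv_rhs => rw [← htcons]
        simp [Nat.add_comm]
      have hpref : ∀ j : ℕ, 0 ≤ (pos ((fromSteps d).take j)).1 ∧
          -1 ≤ (pos ((fromSteps d).take j)).2 := by
        have hyp : ∀ i : ℕ,
            0 ≤ (((0:ℤ),(0:ℤ)) + ((toSteps (fromSteps d) 0).take i).sum).1 ∧
            -1 ≤ (((0:ℤ),(0:ℤ)) + ((toSteps (fromSteps d) 0).take i).sum).2 := by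
          intro i
          rw [hts]
          rcases le_or_gt i d.length with hi | hi
          · exact hbnd _ (List.mem_iff_getElem?.mpr ⟨i, hwget i hi⟩)
          · rw [List.take_of_length_le (le_of_lt hi)]
            have h7 := hwget d.length le_rfl
            rw [List.take_length] at h7
            exact hbnd _ (List.mem_iff_getElem?.mpr ⟨_, h7⟩)
        intro j
        have h8 := bounds_prefix hB ((0:ℤ),(0:ℤ)) hyp j
        simpa using h8
      refine ⟨SChar.g :: (fromSteps d).dropLast, ⟨?_, ?_, ?_, ?_, ?_, ?_⟩, ?_⟩
      · rw [hslen, htlen]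
      · rw [hcnt, hcg]
      · rw [hcnt, hcb]
      · rw [hcnt, hcr]
      · intro m
        cases m with
        | zero => simp
        | succ m =>
          rw [List.take_succ_cons]
          have hdrop : (fromSteps d).dropLast.take m
              = (fromSteps d).take (min m ((fromSteps d).length - 1)) := by
            rw [List.dropLast_eq_take, List.take_take]
          rw [hdrop]
          have h9 := hpref (min m ((fromSteps d).length - 1))
          rw [pos] at h9
          simp only [List.count_cons]
          constructor <;> simp <;> omega
      · intro i ⟨h1', h2'⟩
        cases i with
        | zero => simp at h1'
        | succ i =>
          rw [List.getElem?_cons_succ] at h1' h2'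
          have hi2 : i + 1 < (fromSteps d).dropLast.length := by
            rcases List.getElem?_eq_some_iff.mp h2' with ⟨h, _⟩
            exact h
          rw [List.length_dropLast] at hi2
          rw [List.dropLast_eq_take] at h1' h2'
          rw [List.getElem?_take_of_lt (by omega)] at h1'
          rw [List.getElem?_take_of_lt (by omega)] at h2'
          exact blocks_no_rb hB i ⟨h1', h2'⟩
      · have hrot : (SChar.g :: (fromSteps d).dropLast).rotate 1 = fromSteps d := by
          rw [List.rotate_cons_succ, List.rotate_zero, htcons]
        rw [walkOf, hrot, hts, ← hw_eq]

/-- The map `s ↦ walkOf s` is a bijection between Schnyder wood strings of length `3n`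
and walks of length `2n` with increments in `{(-k,1) : k ≥ 0} ∪ {(1,-1)}` that start and
end at the origin and stay in `{x ≥ 0, y ≥ -1}`. -/
theorem schnyder_string_walk_bijection (n : ℕ) :
    Set.BijOn walkOf {s | IsSchnyderString n s} {w | IsGoodWalk n w} := by
  refine ⟨fun s hs => mapsTo_good hs, fun s1 h1 s2 h2 he => inj_walk h1 h2 he,
    fun w hw => ?_⟩
  obtain ⟨s, hs, hws⟩ := surj_walk hw
  exact ⟨s, hs, hws⟩
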